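/- In any group G satisfying [G'', G, G] = 1, for all u, v, w in the derived subgroup G', we have [uv, w] = [u, w][v, w] and [u, vw] = [u, v][u, w]. -/

import Mathlib

open scoped commutatorElement

theorem stmt2 {G : Type*} [Group G]
    (h : ⁅⁅derivedSeries G 2, (⊤ : Subgroup G)⁆, (⊤ : Subgroup G)⁆ = (⊥ : Subgroup G))
    (u v w : G) (hu : u ∈ derivedSeries G 1) (hv : v ∈ derivedSeries G 1)
    (hw : w ∈ derivedSeries G 1) :
    ⁅u * v, w⁆ = ⁅u, w⁆ * ⁅v, w⁆ ∧ ⁅u, v * w⁆ = ⁅u, v⁆ * ⁅u, w⁆ := by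
  -- Three subgroups lemma: ⁅G', G''⁆ = ⊥
  have h' : ⁅⁅(⊤ : Subgroup G), derivedSeries G 2⁆, (⊤ : Subgroup G)⁆ = ⊥ := by
    rwa [Subgroup.commutator_comm (⊤ : Subgroup G) (derivedSeries G 2)]
  have key : ⁅⁅(⊤ : Subgroup G), (⊤ : Subgroup G)⁆, derivedSeries G 2⁆ = ⊥ :=
    Subgroup.commutator_commutator_eq_bot_of_rotate h' h
  have hd1 : derivedSeries G 1 = ⁅(⊤ : Subgroup G), (⊤ : Subgroup G)⁆ := rfl
  -- every element of G'' commutes with every element of G'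
  have hcomm : ∀ a b : G, a ∈ derivedSeries G 1 → b ∈ derivedSeries G 2 →
      Commute a b := by
    intro a b ha hb
    have : ⁅a, b⁆ ∈ (⊥ : Subgroup G) := by
      rw [← key]
      exact Subgroup.commutator_mem_commutator (hd1 ▸ ha) hb
    rw [Subgroup.mem_bot] at this
    exact commutatorElement_eq_one_iff_commute.mp this
  have huw : ⁅u, w⁆ ∈ derivedSeries G 2 := Subgroup.commutator_mem_commutator hu hw
  have hvw : ⁅v, w⁆ ∈ derivedSeries G 2 := Subgroup.commutator_mem_commutator hv hw
  have c1 : Commute u ⁅v, w⁆ := hcomm u ⁅v, w⁆ hu hvw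
  have c2 : Commute v ⁅u, w⁆ := hcomm v ⁅u, w⁆ hv huw
  have h21 : derivedSeries G 2 ≤ derivedSeries G 1 := by
    have := derivedSeries_normal G 1
    exact Subgroup.commutator_le_left _ _
  have c3 : Commute ⁅u, w⁆ ⁅v, w⁆ := hcomm ⁅u, w⁆ ⁅v, w⁆ (h21 huw) hvw
  refine ⟨?_, ?_⟩
  · have e1 : ⁅u * v, w⁆ = (u * ⁅v, w⁆ * u⁻¹) * ⁅u, w⁆ := by
      simp only [commutatorElement_def]; group
    rw [e1, c1.eq, c3.eq]
    group
  · have e2 : ⁅u, v * w⁆ = ⁅u, v⁆ * (v * ⁅u, w⁆ * v⁻¹) := by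
      simp only [commutatorElement_def]; group
    rw [e2, c2.eq]
    group
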